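/- Let R be a commutative ring with bounded p^∞-torsion (there exists N with R[p^∞] = R[p^N]), and S a p-adically complete R-algebra. If R/p^n R → S/p^n S is faithfully flat for all n ≥ 1, and R is additionally Noetherian and p-Zariskian (p ∈ Jac(R)), then R → S is faithfully flat. -/

import Mathlib

open scoped BigOperators

/-- A δ-structure on a commutative `ℤ_(p)`-algebra `A`: a map `δ : A → A` with
`δ(0) = δ(1) = 0`, `δ(a+b) = δ a + δ b + (a^p + b^p - (a+b)^p)/p` (expressed via binomial
coefficients divided by the prime `p`), and
`δ(ab) = a^p δ b + b^p δ a + p δ a δ b`.  The field `isUnit_of_not_dvd` expresses that `A`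
is a `ℤ_(p)`-algebra. -/
structure DeltaStructure (A : Type) [CommRing A] (p : ℕ) : Type where
  δ : A → A
  delta_zero : δ 0 = 0
  delta_one : δ 1 = 0
  delta_add : ∀ a b : A, δ (a + b) = δ a + δ b -
      ∑ i ∈ Finset.Ioo 0 p, (((p.choose i) / p : ℕ) : A) * a ^ i * b ^ (p - i)
  delta_mul : ∀ a b : A, δ (a * b) =
      a ^ p * δ b + b ^ p * δ a + (p : A) * δ a * δ b
  isUnit_of_not_dvd : ∀ n : ℤ, ¬ ((p : ℤ) ∣ n) → IsUnit ((n : A))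

/-- The Frobenius lift `φ(a) = a^p + p·δ(a)` associated to a δ-structure. -/
def DeltaStructure.phi {A : Type} [CommRing A] {p : ℕ} (D : DeltaStructure A p) (a : A) : A :=
  a ^ p + (p : A) * D.δ a

/-- An `A`-module `M` is derived `f`-complete iff the map `(xₙ) ↦ (xₙ - f·xₙ₊₁)` on `M^ℕ`
is bijective (equivalently, `Hom(A[1/f], M) = Ext¹(A[1/f], M) = 0`). -/
def DerivedFComplete {A : Type} [CommRing A] (f : A) (M : Type) [AddCommGroup M]
    [Module A M] : Prop :=
  Function.Bijective (fun x : ℕ → M => fun n => x n - f • x (n + 1))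
/-- A ring map is faithfully flat if its target is a faithfully flat module via it. -/
def IsFaithfullyFlatRingHom {R S : Type} [CommRing R] [CommRing S] (f : R →+* S) : Prop :=
  letI := f.toAlgebra
  Module.FaithfullyFlat R S

lemma span_pow_le_comap (p n : ℕ) {R S : Type} [CommRing R] [CommRing S] [Algebra R S] :
    Ideal.span {(p : R) ^ n} ≤ (Ideal.span {(p : S) ^ n}).comap (algebraMap R S) := by
  rw [Ideal.span_le, Set.singleton_subset_iff, SetLike.mem_coe, Ideal.mem_comap,
    map_pow, map_natCast]
  exact Ideal.subset_span rfl

private lemma pi_smul_top_mem_iff {R : Type} [CommRing R] {ι : Type} [Fintype ι]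
    (J : Ideal R) (x : ι → R) :
    x ∈ (J • ⊤ : Submodule R (ι → R)) ↔ ∀ i, x i ∈ J := by
  constructor
  · intro hx
    refine Submodule.smul_induction_on hx ?_ ?_
    · intro r hr n _ i
      exact J.mul_mem_right (n i) hr
    · intro a b ha hb i
      exact J.add_mem (ha i) (hb i)
  · intro hx
    classical
    have hxx : x = ∑ i, x i • (Pi.single i (1 : R) : ι → R) := by
      ext j
      simp [Pi.single_apply, Finset.sum_ite_eq', mul_comm]
    rw [hxx]
    exact Submodule.sum_mem _ fun i _ =>
      Submodule.smul_mem_smul (hx i) Submodule.mem_top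

private lemma lmap_equivFun {A M : Type} [CommRing A] [AddCommGroup M] [Module A M]
    {κ : Type} [Fintype κ] (φ : (κ →₀ A) →ₗ[A] M) (w : κ → A) :
    φ (Finsupp.equivFunOnFinite.symm w) = ∑ j, w j • φ (Finsupp.single j 1) := by
  have h : Finsupp.equivFunOnFinite.symm w = ∑ j, w j • Finsupp.single j (1 : A) := by
    rw [← Finsupp.univ_sum_single (Finsupp.equivFunOnFinite.symm w)]
    refine Finset.sum_congr rfl fun j _ => ?_
    rw [Finsupp.smul_single, smul_eq_mul, mul_one]
    rfl
  rw [h, map_sum]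
  refine Finset.sum_congr rfl fun j _ => ?_
  rw [map_smul]

private lemma pow_span_le {S : Type} [CommRing S] (s : S) {m n : ℕ} (h : m ≤ n) :
    Ideal.span {s ^ n} ≤ Ideal.span {s ^ m} :=
  Ideal.span_singleton_le_span_singleton.mpr (pow_dvd_pow s h)

private lemma smul_top_eq {S : Type} [CommRing S] (s : S) (m : ℕ) :
    (Ideal.span {s} ^ m • ⊤ : Submodule S S) = Ideal.span {s ^ m} := by
  rw [smul_eq_mul, Ideal.mul_top, Ideal.span_singleton_pow]

private lemma span_sol {R S : Type} [CommRing R] [CommRing S] [Algebra R S]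
    {ι κ : Type} [Fintype ι] [Fintype κ] (G : ι → κ → R) {l : κ → S}
    (hl : l ∈ Submodule.span S ((fun g : κ → R => fun j => algebraMap R S (g j)) ''
        {g : κ → R | ∀ i, ∑ j, G i j * g j = 0})) (i : ι) :
    ∑ j, algebraMap R S (G i j) * l j = 0 := by
  induction hl using Submodule.span_induction with
  | mem v hv =>
    obtain ⟨g, hg, rfl⟩ := hv
    have : ∑ j, algebraMap R S (G i j) * algebraMap R S (g j)
        = algebraMap R S (∑ j, G i j * g j) := by
      rw [map_sum]
      exact Finset.sum_congr rfl fun j _ => (map_mul _ _ _).symm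
    rw [this, hg i, map_zero]
  | zero => simp
  | add v w _ _ hv hw =>
    simp only [Pi.add_apply, mul_add, Finset.sum_add_distrib, hv, hw, add_zero]
  | smul c v _ hv =>
    simp only [Pi.smul_apply, smul_eq_mul]
    calc ∑ j, algebraMap R S (G i j) * (c * v j)
        = c * ∑ j, algebraMap R S (G i j) * v j := by
          rw [Finset.mul_sum]; exact Finset.sum_congr rfl fun j _ => by ring
      _ = 0 := by rw [hv, mul_zero]

private lemma approx_lemma (p : ℕ) {R S : Type} [CommRing R] [CommRing S]
    [Algebra R S] [IsNoetherianRing R]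
    (hff : ∀ n : ℕ, 1 ≤ n → IsFaithfullyFlatRingHom
      (Ideal.quotientMap (Ideal.span {(p : S) ^ n}) (algebraMap R S) (span_pow_le_comap p n)))
    {ι κ : Type} [Fintype ι] [Fintype κ] (G : ι → κ → R) :
    ∃ c : ℕ, ∀ m : ℕ, ∀ x : κ → S,
      (∀ i, ∑ j, algebraMap R S (G i j) * x j ∈ Ideal.span {(p : S) ^ (m + c)}) →
      ∃ l ∈ Submodule.span S ((fun g : κ → R => fun j => algebraMap R S (g j)) ''
          {g : κ → R | ∀ i, ∑ j, G i j * g j = 0}),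
        ∀ j, x j - l j ∈ Ideal.span {(p : S) ^ m} := by
  classical
  set Φ : (κ → R) →ₗ[R] (ι → R) :=
    LinearMap.pi (fun i => ∑ j, G i j • LinearMap.proj j) with hΦdef
  have hΦapply : ∀ (g : κ → R) (i : ι), Φ g i = ∑ j, G i j * g j := by
    intro g i
    simp [Φ, LinearMap.pi_apply, LinearMap.sum_apply, smul_eq_mul]
  obtain ⟨k, hk⟩ := Ideal.exists_pow_inf_eq_pow_smul (Ideal.span {(p : R)}) (LinearMap.range Φ)
  refine ⟨k + 1, fun m x hx => ?_⟩
  set M0 := m + (k + 1) with hM0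
  set JR := Ideal.span {(p : R) ^ M0} with hJR
  set JS := Ideal.span {(p : S) ^ M0} with hJS
  letI alg' : Algebra (R ⧸ JR) (S ⧸ JS) :=
    (Ideal.quotientMap JS (algebraMap R S) (span_pow_le_comap p M0)).toAlgebra
  haveI hFF : Module.FaithfullyFlat (R ⧸ JR) (S ⧸ JS) := hff M0 (by omega)
  haveI hflat : Module.Flat (R ⧸ JR) (S ⧸ JS) := hFF.toFlat
  have hsmul : ∀ (r : R) (s : S),
      (Ideal.Quotient.mk JR r) • (Ideal.Quotient.mk JS s)
        = Ideal.Quotient.mk JS (algebraMap R S r * s) := by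
    intro r s
    rw [Algebra.smul_def, RingHom.algebraMap_toAlgebra, Ideal.quotientMap_mk]
    exact (map_mul _ _ _).symm
  have hrel' : ∀ i, ∑ j, (Ideal.Quotient.mk JR (G i j)) • (Ideal.Quotient.mk JS (x j)) = 0 := by
    intro i
    have : ∑ j, (Ideal.Quotient.mk JR (G i j)) • (Ideal.Quotient.mk JS (x j))
        = Ideal.Quotient.mk JS (∑ j, algebraMap R S (G i j) * x j) := by
      rw [map_sum]
      exact Finset.sum_congr rfl fun j _ => hsmul _ _
    rw [this, Ideal.Quotient.eq_zero_iff_mem]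
    exact hx i
  set v : ι → (κ →₀ R ⧸ JR) := fun i =>
    Finsupp.equivFunOnFinite.symm (fun j => Ideal.Quotient.mk JR (G i j)) with hv
  set fK : (ι →₀ R ⧸ JR) →ₗ[R ⧸ JR] (κ →₀ R ⧸ JR) := Finsupp.linearCombination _ v with hfK
  set xN : (κ →₀ R ⧸ JR) →ₗ[R ⧸ JR] (S ⧸ JS) :=
    Finsupp.linearCombination _ (fun j => Ideal.Quotient.mk JS (x j)) with hxN
  have hcomp : xN ∘ₗ fK = 0 := by
    refine Finsupp.lhom_ext fun i r => ?_
    have h1 : fK (Finsupp.single i r) = r • v i := Finsupp.linearCombination_single _ _ _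
    have h2 : xN (v i) = 0 := by
      rw [hv, lmap_equivFun]
      have : ∀ j : κ, xN (Finsupp.single j 1) = Ideal.Quotient.mk JS (x j) := by
        intro j
        rw [hxN, Finsupp.linearCombination_single, one_smul]
      simp only [this]
      exact hrel' i
    simp [h1, map_smul, h2]
  obtain ⟨n₂, a, y, hxy, haf⟩ :=
    Module.Flat.exists_factorization_of_comp_eq_zero_of_free (R := R ⧸ JR) (M := S ⧸ JS) hcomp
  haveI : Fintype (Fin n₂) := inferInstance
  choose A hA using fun (j : κ) (t : (Fin n₂)) =>
    Ideal.Quotient.mk_surjective (I := JR) (a (Finsupp.single j 1) t)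
  choose Y hY using fun (t : (Fin n₂)) =>
    Ideal.Quotient.mk_surjective (I := JS) (y (Finsupp.single t 1))
  have hxj : ∀ j, x j - ∑ t, Y t * algebraMap R S (A j t) ∈ JS := by
    intro j
    rw [← Ideal.Quotient.eq_zero_iff_mem, map_sub, map_sum]
    have h1 : Ideal.Quotient.mk JS (x j) = xN (Finsupp.single j 1) := by
      rw [hxN, Finsupp.linearCombination_single, one_smul]
    have h2 : xN (Finsupp.single j 1) = y (a (Finsupp.single j 1)) := by
      rw [hxy]; rfl
    have h4 : y (a (Finsupp.single j 1)) = ∑ t, (a (Finsupp.single j 1) t) • y (Finsupp.single t 1) := by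
      conv_lhs => rw [← Finsupp.equivFunOnFinite_symm_coe (a (Finsupp.single j 1))]
      exact lmap_equivFun y _
    have h5 : ∀ t : (Fin n₂), Ideal.Quotient.mk JS (Y t * algebraMap R S (A j t))
        = (a (Finsupp.single j 1) t) • y (Finsupp.single t 1) := by
      intro t
      rw [mul_comm, ← hA j t, ← hY t, hsmul]
    simp only [h5, h1, h2, h4]
    rw [sub_eq_zero]
  have hArel : ∀ (i : ι) (t : (Fin n₂)), ∑ j, G i j * A j t ∈ JR := by
    intro i t
    rw [← Ideal.Quotient.eq_zero_iff_mem, map_sum]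
    have h0 : a (fK (Finsupp.single i 1)) = 0 := by
      have := LinearMap.congr_fun haf (Finsupp.single i 1)
      simpa using this
    have h1 : fK (Finsupp.single i 1) = v i := by
      rw [hfK, Finsupp.linearCombination_single, one_smul]
    have h2 : a (v i) = ∑ j, (Ideal.Quotient.mk JR (G i j)) • a (Finsupp.single j 1) := by
      rw [hv, lmap_equivFun]
    have h3 : (0 : (Fin n₂) →₀ R ⧸ JR) t = 0 := rfl
    have h4 : (∑ j, (Ideal.Quotient.mk JR (G i j)) • a (Finsupp.single j 1)) t
        = ∑ j, (Ideal.Quotient.mk JR (G i j)) * a (Finsupp.single j 1) t := by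
      rw [Finset.sum_apply']
      exact Finset.sum_congr rfl fun j _ => rfl
    have : ∑ j, (Ideal.Quotient.mk JR (G i j)) * a (Finsupp.single j 1) t = 0 := by
      rw [← h4, ← h2, ← h1, h0, h3]
    rw [← this]
    exact Finset.sum_congr rfl fun j _ => by rw [map_mul, hA]
  -- Artin-Rees step
  have hAR : ∀ t : (Fin n₂), ∃ d : κ → R,
      (∀ j, d j ∈ Ideal.span {(p : R) ^ (m + 1)}) ∧ Φ d = Φ (fun j => A j t) := by
    intro t
    have hmem : Φ (fun j => A j t)
        ∈ (Ideal.span {(p : R)} ^ M0 • ⊤ ⊓ LinearMap.range Φ : Submodule R (ι → R)) := by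
      refine ⟨(pi_smul_top_mem_iff _ _).mpr fun i => ?_, ⟨_, rfl⟩⟩
      rw [Ideal.span_singleton_pow, hΦapply]
      exact hArel i t
    rw [hk M0 (by omega)] at hmem
    have hsub : M0 - k = m + 1 := by omega
    rw [hsub] at hmem
    have hmem2 : Φ (fun j => A j t)
        ∈ (Ideal.span {(p : R)} ^ (m + 1) • ⊤ : Submodule R (κ → R)).map Φ := by
      rw [Submodule.map_smul'', Submodule.map_top]
      exact (smul_mono_right _ inf_le_right :
        _ ≤ Ideal.span {(p : R)} ^ (m + 1) • LinearMap.range Φ) hmem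
    obtain ⟨d, hd, hΦd⟩ := hmem2
    refine ⟨d, fun j => ?_, hΦd⟩
    rw [← Ideal.span_singleton_pow]
    exact (pi_smul_top_mem_iff _ _).mp hd j
  choose d hd hΦd using hAR
  refine ⟨fun j => ∑ t, Y t * algebraMap R S (A j t - d t j), ?_, ?_⟩
  · have heq : (fun j => ∑ t, Y t * algebraMap R S (A j t - d t j))
        = ∑ t, Y t • (fun j => algebraMap R S (A j t - d t j)) := by
      ext j
      simp [Finset.sum_apply]
    rw [heq]
    refine Submodule.sum_mem _ fun t _ => Submodule.smul_mem _ _ (Submodule.subset_span ?_)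
    refine ⟨fun j => A j t - d t j, fun i => ?_, rfl⟩
    have h6 : ∑ j, G i j * (A j t - d t j) = Φ (fun j => A j t) i - Φ (d t) i := by
      rw [hΦapply, hΦapply, ← Finset.sum_sub_distrib]
      exact Finset.sum_congr rfl fun j _ => by ring
    rw [h6, hΦd t, sub_self]
  · intro j
    show x j - ∑ t, Y t * algebraMap R S (A j t - d t j) ∈ Ideal.span {(p : S) ^ m}
    have hlj : ∑ t, Y t * algebraMap R S (A j t - d t j)
        = ∑ t, Y t * algebraMap R S (A j t) - ∑ t, Y t * algebraMap R S (d t j) := by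
      rw [← Finset.sum_sub_distrib]
      exact Finset.sum_congr rfl fun t _ => by rw [map_sub, mul_sub]
    rw [hlj]
    have h1 : x j - (∑ t, Y t * algebraMap R S (A j t) - ∑ t, Y t * algebraMap R S (d t j))
        = (x j - ∑ t, Y t * algebraMap R S (A j t)) + ∑ t, Y t * algebraMap R S (d t j) := by
      ring
    rw [h1]
    refine Ideal.add_mem _ (pow_span_le _ (by omega) (hxj j))
      (Submodule.sum_mem _ fun t _ => Ideal.mul_mem_left _ _ ?_)
    have h2 : algebraMap R S (d t j) ∈ Ideal.span {(p : S) ^ (m + 1)} := by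
      have hdvd : (p : R) ^ (m + 1) ∣ d t j := Ideal.mem_span_singleton.mp (hd t j)
      rw [Ideal.mem_span_singleton]
      have h3 := map_dvd (algebraMap R S) hdvd
      rwa [map_pow, map_natCast] at h3
    exact pow_span_le _ (by omega) h2

theorem statement13 (p : ℕ) [Fact (Nat.Prime p)] {R S : Type} [CommRing R] [CommRing S]
    [Algebra R S] [IsNoetherianRing R]
    (hbd : ∃ N : ℕ, ∀ a : R, (∃ n : ℕ, (p : R) ^ n * a = 0) → (p : R) ^ N * a = 0)
    (hzar : (p : R) ∈ Ideal.jacobson (⊥ : Ideal R))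
    (hcompl : IsAdicComplete (Ideal.span {(p : S)}) S)
    (hff : ∀ n : ℕ, 1 ≤ n → IsFaithfullyFlatRingHom
      (Ideal.quotientMap (Ideal.span {(p : S) ^ n}) (algebraMap R S) (span_pow_le_comap p n))) :
    Module.FaithfullyFlat R S := by
  classical
  have hflat : Module.Flat R S := by
    rw [Module.Flat.iff_forall_isTrivialRelation]
    suffices H : ∀ {ι : Type} [Fintype ι] {f : ι → R} {x : ι → S},
        ∑ i, f i • x i = 0 → Module.IsTrivialRelation f x by
      intro l f x h; exact H h
    intro ι _ f x hrel
    obtain ⟨c₁, hU1⟩ := approx_lemma p hff (fun _ : Unit => f)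
    set φf : (ι → R) →ₗ[R] R := ∑ j, f j • LinearMap.proj j with hφf
    have hφfapply : ∀ g : ι → R, φf g = ∑ j, f j * g j := by
      intro g; simp [φf, LinearMap.sum_apply, smul_eq_mul]
    obtain ⟨T, hT⟩ := IsNoetherian.noetherian (LinearMap.ker φf)
    set b : {w : ι → R // w ∈ T} → (ι → R) := fun j => j.1 with hb
    have hbK : ∀ j, ∑ i, f i * b j i = 0 := by
      intro j
      have hj : b j ∈ LinearMap.ker φf := by
        rw [← hT]; exact Submodule.subset_span j.2
      rw [LinearMap.mem_ker, hφfapply] at hj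
      exact hj
    obtain ⟨c₂, hU2⟩ := approx_lemma p hff (fun (i : ι) (j : {w : ι → R // w ∈ T}) => b j i)
    have hax : ∀ m : ℕ, ∃ y : {w : ι → R // w ∈ T} → S,
        ∀ i, x i - ∑ j, algebraMap R S (b j i) * y j ∈ Ideal.span {(p : S) ^ m} := by
      intro m
      have h0 : ∀ _ : Unit, ∑ j, algebraMap R S (f j) * x j
          ∈ Ideal.span {(p : S) ^ (m + c₁)} := by
        intro _
        have he : ∑ j, algebraMap R S (f j) * x j = ∑ j, f j • x j :=
          Finset.sum_congr rfl fun j _ => (Algebra.smul_def _ _).symm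
        rw [he, hrel]
        exact Ideal.zero_mem _
      obtain ⟨l, hlmem, hlcl⟩ := hU1 m x h0
      have hy : ∃ y : {w : ι → R // w ∈ T} → S,
          ∀ i, l i = ∑ j, algebraMap R S (b j i) * y j := by
        have hsub : Submodule.span S ((fun g : ι → R => fun i => algebraMap R S (g i)) ''
            {g : ι → R | ∀ _ : Unit, ∑ j, f j * g j = 0})
            ≤ LinearMap.range (LinearMap.pi (fun i : ι =>
              ∑ j : {w : ι → R // w ∈ T}, (algebraMap R S (b j i)) • LinearMap.proj j) :
                ({w : ι → R // w ∈ T} → S) →ₗ[S] (ι → S)) := by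
          rw [Submodule.span_le]
          rintro _ ⟨g, hg, rfl⟩
          have hgK : g ∈ Submodule.span R (↑T : Set (ι → R)) := by
            rw [hT, LinearMap.mem_ker, hφfapply]
            exact hg ()
          rw [Submodule.mem_span_finset] at hgK
          obtain ⟨r, -, hr⟩ := hgK
          refine ⟨fun j => algebraMap R S (r (b j)), ?_⟩
          ext i
          have h1 : (LinearMap.pi (fun i : ι =>
              ∑ j : {w : ι → R // w ∈ T}, (algebraMap R S (b j i)) • LinearMap.proj j) :
                ({w : ι → R // w ∈ T} → S) →ₗ[S] (ι → S))
              (fun j => algebraMap R S (r (b j))) i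
              = ∑ j : {w : ι → R // w ∈ T},
                  algebraMap R S (b j i) * algebraMap R S (r (b j)) := by
            simp only [LinearMap.pi_apply, LinearMap.sum_apply, LinearMap.smul_apply,
              LinearMap.proj_apply, smul_eq_mul]
          rw [h1]
          have h2 : ∑ j : {w : ι → R // w ∈ T},
              algebraMap R S (b j i) * algebraMap R S (r (b j))
              = algebraMap R S (∑ w ∈ T, r w * w i) := by
            rw [map_sum, Finset.univ_eq_attach,
              ← Finset.sum_attach T (fun w => algebraMap R S (r w * w i))]
            exact Finset.sum_congr rfl fun j _ => by rw [map_mul, mul_comm]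
          rw [h2, ← hr]
          show algebraMap R S (∑ w ∈ T, r w * w i) = algebraMap R S ((∑ w ∈ T, r w • w) i)
          have h3 : (∑ w ∈ T, r w • w) i = ∑ w ∈ T, r w * w i := by
            rw [Finset.sum_apply]; rfl
          rw [h3]
        obtain ⟨y, hy⟩ := hsub hlmem
        refine ⟨y, fun i => ?_⟩
        rw [← hy]
        simp only [LinearMap.pi_apply, LinearMap.sum_apply, LinearMap.smul_apply,
          LinearMap.proj_apply, smul_eq_mul]
      obtain ⟨y, hy⟩ := hy
      refine ⟨y, fun i => ?_⟩
      rw [← hy i]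
      exact hlcl i
    choose u hu using hax
    set w : ℕ → {w : ι → R // w ∈ T} → S := fun m => u (m + c₂) with hw
    have hdiff : ∀ m : ℕ, ∀ i, ∑ j, algebraMap R S (b j i) * (w (m + 1) j - w m j)
        ∈ Ideal.span {(p : S) ^ (m + c₂)} := by
      intro m i
      have he : ∑ j, algebraMap R S (b j i) * (w (m + 1) j - w m j)
          = (x i - ∑ j, algebraMap R S (b j i) * w m j)
            - (x i - ∑ j, algebraMap R S (b j i) * w (m + 1) j) := by
        have h4 : ∑ j, algebraMap R S (b j i) * (w (m + 1) j - w m j)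
            = ∑ j, algebraMap R S (b j i) * w (m + 1) j
              - ∑ j, algebraMap R S (b j i) * w m j := by
          rw [← Finset.sum_sub_distrib]
          exact Finset.sum_congr rfl fun j _ => mul_sub _ _ _
        rw [h4]; ring
      rw [he]
      exact Submodule.sub_mem _ (hu (m + c₂) i)
        (pow_span_le _ (by omega) (hu (m + 1 + c₂) i))
    have hl : ∀ m : ℕ, ∃ l, l ∈ Submodule.span S
        ((fun g : {w : ι → R // w ∈ T} → R => fun j => algebraMap R S (g j)) ''
          {g | ∀ i, ∑ j, b j i * g j = 0}) ∧
        ∀ j, (w (m + 1) j - w m j) - l j ∈ Ideal.span {(p : S) ^ m} := by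
      intro m
      obtain ⟨l, h5, h6⟩ := hU2 m (fun j => w (m + 1) j - w m j) (hdiff m)
      exact ⟨l, h5, h6⟩
    choose l hlmem hlsm using hl
    set v : ℕ → {w : ι → R // w ∈ T} → S :=
      fun m => fun j => w m j - ∑ k ∈ Finset.range m, l k j with hv
    have hvdiff : ∀ m j, v (m + 1) j - v m j ∈ Ideal.span {(p : S) ^ m} := by
      intro m j
      have h7 : v (m + 1) j - v m j = (w (m + 1) j - w m j) - l m j := by
        simp only [hv, Finset.sum_range_succ]; ring
      rw [h7]; exact hlsm m j
    have hBv : ∀ m i, ∑ j, algebraMap R S (b j i) * v m j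
        = ∑ j, algebraMap R S (b j i) * w m j := by
      intro m i
      have hz : ∀ k, ∑ j, algebraMap R S (b j i) * l k j = 0 := fun k =>
        span_sol (fun (i : ι) (j : {w : ι → R // w ∈ T}) => b j i) (hlmem k) i
      have e1 : ∀ j, algebraMap R S (b j i) * v m j
          = algebraMap R S (b j i) * w m j
            - ∑ k ∈ Finset.range m, algebraMap R S (b j i) * l k j := by
        intro j
        simp only [hv]
        rw [mul_sub, Finset.mul_sum]
      calc ∑ j, algebraMap R S (b j i) * v m j
          = ∑ j, (algebraMap R S (b j i) * w m j
            - ∑ k ∈ Finset.range m, algebraMap R S (b j i) * l k j) :=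
            Finset.sum_congr rfl fun j _ => e1 j
        _ = ∑ j, algebraMap R S (b j i) * w m j
            - ∑ j, ∑ k ∈ Finset.range m, algebraMap R S (b j i) * l k j :=
            Finset.sum_sub_distrib _ _
        _ = ∑ j, algebraMap R S (b j i) * w m j
            - ∑ k ∈ Finset.range m, ∑ j, algebraMap R S (b j i) * l k j := by
            rw [Finset.sum_comm]
        _ = ∑ j, algebraMap R S (b j i) * w m j := by
            rw [Finset.sum_eq_zero (fun k _ => hz k), sub_zero]
    have hcauchy : ∀ j, ∀ m n : ℕ, m ≤ n →
        v m j ≡ v n j [SMOD (Ideal.span {(p : S)} ^ m • ⊤ : Submodule S S)] := by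
      intro j m n hmn
      rw [SModEq.sub_mem, smul_top_eq]
      induction n, hmn using Nat.le_induction with
      | base => rw [sub_self]; exact Ideal.zero_mem _
      | succ n hmn ih =>
        have h8 : v m j - v (n + 1) j = (v m j - v n j) - (v (n + 1) j - v n j) := by ring
        rw [h8]
        exact Submodule.sub_mem _ ih (pow_span_le _ hmn (hvdiff n j))
    have hlim : ∀ j, ∃ L : S, ∀ n,
        v n j ≡ L [SMOD (Ideal.span {(p : S)} ^ n • ⊤ : Submodule S S)] :=
      fun j => hcompl.toIsPrecomplete.prec (fun {m n} hmn => hcauchy j m n hmn)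
    choose Y hY using hlim
    have hsol : ∀ i, x i - ∑ j, algebraMap R S (b j i) * Y j = 0 := by
      intro i
      apply hcompl.toIsHausdorff.haus
      intro n
      rw [SModEq.zero, smul_top_eq]
      have expand : ∑ j, algebraMap R S (b j i) * (v n j - Y j)
          = ∑ j, algebraMap R S (b j i) * v n j
            - ∑ j, algebraMap R S (b j i) * Y j := by
        rw [← Finset.sum_sub_distrib]
        exact Finset.sum_congr rfl fun j _ => mul_sub _ _ _
      have h3 : x i - ∑ j, algebraMap R S (b j i) * Y j
          = (x i - ∑ j, algebraMap R S (b j i) * w n j)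
            + ∑ j, algebraMap R S (b j i) * (v n j - Y j) := by
        rw [expand, hBv n i]; ring
      rw [h3]
      refine Submodule.add_mem _ (pow_span_le _ (by omega) (hu (n + c₂) i))
        (Submodule.sum_mem _ fun j _ => Ideal.mul_mem_left _ _ ?_)
      have h9 := hY j n
      rw [SModEq.sub_mem, smul_top_eq] at h9
      exact h9
    set e := Fintype.equivFin {w : ι → R // w ∈ T}
    refine ⟨Fintype.card {w : ι → R // w ∈ T}, fun i j => b (e.symm j) i, fun j => Y (e.symm j),
      fun i => ?_, fun j => hbK (e.symm j)⟩
    have h10 := hsol i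
    rw [sub_eq_zero] at h10
    rw [h10]
    refine (Finset.sum_congr rfl fun j _ => (Algebra.smul_def _ _).symm).trans ?_
    exact (Equiv.sum_comp e.symm (fun j => b j i • Y j)).symm
  -- faithfulness
  rw [Module.FaithfullyFlat.iff_flat_and_proper_ideal]
  refine ⟨hflat, fun I hI hIs => ?_⟩
  obtain ⟨mm, hmax, hle⟩ := I.exists_le_maximal hI
  have hms : mm • (⊤ : Submodule R S) = ⊤ :=
    top_unique (le_trans (le_of_eq hIs.symm) (Submodule.smul_mono hle le_rfl))
  have hpm : (p : R) ∈ mm := by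
    have h := hzar
    rw [Ideal.jacobson] at h
    exact (Submodule.mem_sInf.mp h) mm ⟨bot_le, hmax⟩
  set JR1 := Ideal.span {(p : R) ^ 1} with hJR1
  set JS1 := Ideal.span {(p : S) ^ 1} with hJS1
  letI alg1 : Algebra (R ⧸ JR1) (S ⧸ JS1) :=
    (Ideal.quotientMap JS1 (algebraMap R S) (span_pow_le_comap p 1)).toAlgebra
  haveI hFF1 : Module.FaithfullyFlat (R ⧸ JR1) (S ⧸ JS1) := hff 1 le_rfl
  have hJle : JR1 ≤ mm := by
    rw [hJR1, Ideal.span_le, Set.singleton_subset_iff]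
    simpa using hpm
  set mm1 := mm.map (Ideal.Quotient.mk JR1) with hmm1
  have hne : mm1 ≠ ⊤ := by
    intro htop
    have hcm := Ideal.comap_map_of_surjective (Ideal.Quotient.mk JR1)
      Ideal.Quotient.mk_surjective mm
    rw [← hmm1, htop, Ideal.comap_top] at hcm
    have hker : Ideal.comap (Ideal.Quotient.mk JR1) ⊥ = JR1 := Ideal.mk_ker
    rw [hker, sup_eq_left.mpr hJle] at hcm
    exact hmax.ne_top hcm.symm
  have hsmul1 : ∀ (r : R) (s : S),
      (Ideal.Quotient.mk JR1 r) • (Ideal.Quotient.mk JS1 s)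
        = Ideal.Quotient.mk JS1 (algebraMap R S r * s) := by
    intro r s
    rw [Algebra.smul_def, RingHom.algebraMap_toAlgebra, Ideal.quotientMap_mk]
    exact (map_mul _ _ _).symm
  have htop1 : mm1 • (⊤ : Submodule (R ⧸ JR1) (S ⧸ JS1)) = ⊤ := by
    rw [eq_top_iff]
    rintro sbar -
    obtain ⟨s, rfl⟩ := Ideal.Quotient.mk_surjective sbar
    have hs : s ∈ mm • (⊤ : Submodule R S) := by rw [hms]; exact Submodule.mem_top
    refine Submodule.smul_induction_on
      (p := fun t => Ideal.Quotient.mk JS1 t ∈ mm1 • (⊤ : Submodule (R ⧸ JR1) (S ⧸ JS1)))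
      hs ?_ ?_
    · intro r hr t _
      have h11 : Ideal.Quotient.mk JS1 (r • t)
          = (Ideal.Quotient.mk JR1 r) • (Ideal.Quotient.mk JS1 t) := by
        rw [hsmul1, Algebra.smul_def]
      rw [h11]
      exact Submodule.smul_mem_smul (Ideal.mem_map_of_mem _ hr) Submodule.mem_top
    · intro a1 b1 ha hb
      rw [map_add]
      exact Submodule.add_mem _ ha hb
  exact ((Module.FaithfullyFlat.iff_flat_and_proper_ideal _ _).mp hFF1).2 mm1 hne htop1
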